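/- Let k₁ ≥ 1 and k₁₂ ≥ 1 be real numbers and let s₂, p₁, p₂ be real. Then the complex-valued function t ↦ t^{-i s₂ - i p₂ - 1/2} · (1-t)^{-k₁₂ + i p₁ + i p₂} · ₂F₁(1/2+k₁-k₁₂-i s₂, 3/2-k₁-k₁₂-i s₂; 1-2i s₂; t) is integrable with respect to Lebesgue measure on (0,1/2), and the function t ↦ t^{-i s₂ - i p₂ - 1/2} · (1-t)^{k₁₂ - 1 + i p₁ + i p₂} · ₂F₁(1/2+k₁+k₁₂-i s₂, -1/2+k₁+k₁₂-i s₂; k₁₂; 1-t) is integrable with respect to Lebesgue measure on (1/2,1). (Convergence of the two pieces of the integral I₁(+,C,+) for the coupling of a positive discrete series with a continuous series to a positive discrete series.) -/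

import Mathlib

open Complex Filter Set MeasureTheory

/-- The `n`-th term of the Gauss hypergeometric series `₂F₁(a,b;c;z)`. -/
noncomputable def hypTerm (a b c z : ℂ) (n : ℕ) : ℂ :=
  (ascPochhammer ℂ n).eval a * (ascPochhammer ℂ n).eval b /
    ((ascPochhammer ℂ n).eval c * (n.factorial : ℂ)) * z ^ n

/-- The Gauss hypergeometric function `₂F₁(a,b;c;z)`. -/
noncomputable def hyp (a b c z : ℂ) : ℂ := ∑' n, hypTerm a b c z n

/-- Convergence of the two pieces of the integral `I₁(+,C,+)` for the coupling of a
positive discrete series with a continuous series to a positive discrete series. -/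
noncomputable def hypBound (x y : ℝ) (n : ℕ) : ℝ :=
  (ascPochhammer ℝ n).eval x * (ascPochhammer ℝ n).eval y / ((n.factorial : ℝ))^2 * (1/2)^n

lemma ascPoch_nonneg {x : ℝ} (hx : 0 ≤ x) (n : ℕ) : 0 ≤ (ascPochhammer ℝ n).eval x := by
  induction n with
  | zero => simp
  | succ n ih =>
      rw [ascPochhammer_succ_eval]
      exact mul_nonneg ih (by positivity)

lemma hypBound_nonneg {x y : ℝ} (hx : 0 ≤ x) (hy : 0 ≤ y) (n : ℕ) : 0 ≤ hypBound x y n := by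
  unfold hypBound
  have := ascPoch_nonneg hx n
  have := ascPoch_nonneg hy n
  positivity

lemma ascPoch_abs_le (a : ℂ) (n : ℕ) :
    ‖(ascPochhammer ℂ n).eval a‖ ≤ (ascPochhammer ℝ n).eval ‖a‖ := by
  induction n with
  | zero => simp
  | succ n ih =>
      rw [ascPochhammer_succ_eval, ascPochhammer_succ_eval, norm_mul]
      have h1 : ‖a + (n : ℂ)‖ ≤ ‖a‖ + n := (norm_add_le _ _).trans (by simp)
      exact mul_le_mul ih h1 (norm_nonneg _) (ascPoch_nonneg (norm_nonneg a) n)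

lemma ascPoch_abs_ge {c : ℂ} (hc : 1 ≤ c.re) (n : ℕ) :
    (n.factorial : ℝ) ≤ ‖(ascPochhammer ℂ n).eval c‖ := by
  induction n with
  | zero => simp
  | succ n ih =>
      rw [ascPochhammer_succ_eval, norm_mul]
      have h1 : (n : ℝ) + 1 ≤ ‖c + (n : ℂ)‖ := by
        have := Complex.re_le_norm (c + n)
        simp only [Complex.add_re, Complex.natCast_re] at this
        calc (n : ℝ) + 1 ≤ c.re + n := by linarith
          _ ≤ ‖c + (n : ℂ)‖ := by exact this
      have hfac : (0:ℝ) ≤ n.factorial := Nat.cast_nonneg _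
      calc ((n+1).factorial : ℝ) = n.factorial * ((n:ℝ)+1) := by
            push_cast [Nat.factorial_succ]; ring
        _ ≤ ‖(ascPochhammer ℂ n).eval c‖ * ‖c + (n : ℂ)‖ :=
            mul_le_mul ih h1 (by positivity) (norm_nonneg _)

lemma summable_hypBound {x y : ℝ} (hx : 0 ≤ x) (hy : 0 ≤ y) : Summable (hypBound x y) := by
  apply summable_of_ratio_norm_eventually_le (r := 3/4) (by norm_num)
  have hN : ∀ᶠ n : ℕ in atTop, 2*(x+y) + 2*x*y + 2 ≤ (n : ℝ) := by
    have := tendsto_natCast_atTop_atTop (R := ℝ)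
    exact this.eventually_ge_atTop _
  filter_upwards [hN] with n hn
  have hterm : hypBound x y (n+1) =
      hypBound x y n * ((x + n) * (y + n) / (2 * ((n:ℝ)+1)^2)) := by
    unfold hypBound
    rw [ascPochhammer_succ_eval, ascPochhammer_succ_eval, Nat.factorial_succ]
    have h2 : ((n.factorial : ℝ)) ≠ 0 := Nat.cast_ne_zero.mpr n.factorial_ne_zero
    push_cast
    field_simp
    ring
  have hb := hypBound_nonneg hx hy n
  have hratio : (x + n) * (y + n) / (2 * ((n:ℝ)+1)^2) ≤ 3/4 := by
    rw [div_le_iff₀ (by positivity)]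
    have hn0 : (0:ℝ) ≤ n := Nat.cast_nonneg n
    nlinarith [mul_nonneg hx hy, mul_le_mul_of_nonneg_left hn hn0,
      mul_nonneg (by nlinarith [mul_nonneg hx hy] : (0:ℝ) ≤ (n:ℝ) - 1) (mul_nonneg hx hy)]
  have hratio0 : 0 ≤ (x + n) * (y + n) / (2 * ((n:ℝ)+1)^2) := by positivity
  rw [Real.norm_of_nonneg (hypBound_nonneg hx hy _), Real.norm_of_nonneg hb, hterm]
  calc hypBound x y n * ((x + n) * (y + n) / (2 * ((n:ℝ)+1)^2))
      ≤ hypBound x y n * (3/4) := mul_le_mul_of_nonneg_left hratio hb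
    _ = 3/4 * hypBound x y n := by ring

lemma norm_hypTerm_le {a b c z : ℂ} (hc : 1 ≤ c.re) (hz : ‖z‖ ≤ 1/2) (n : ℕ) :
    ‖hypTerm a b c z n‖ ≤ hypBound ‖a‖ ‖b‖ n := by
  unfold hypTerm hypBound
  rw [norm_mul, norm_div, norm_mul, norm_mul, norm_pow]
  have hfac : (0:ℝ) < n.factorial := by exact_mod_cast n.factorial_pos
  have hden : ((n.factorial : ℝ))^2 ≤ ‖(ascPochhammer ℂ n).eval c‖ * ‖(n.factorial : ℂ)‖ := by
    rw [Complex.norm_natCast, sq]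
    exact mul_le_mul_of_nonneg_right (ascPoch_abs_ge hc n) hfac.le
  have hnum : ‖(ascPochhammer ℂ n).eval a‖ * ‖(ascPochhammer ℂ n).eval b‖ ≤
      (ascPochhammer ℝ n).eval ‖a‖ * (ascPochhammer ℝ n).eval ‖b‖ :=
    mul_le_mul (ascPoch_abs_le a n) (ascPoch_abs_le b n) (norm_nonneg _)
      (ascPoch_nonneg (norm_nonneg a) n)
  have hpa := ascPoch_nonneg (norm_nonneg a) n
  have hpb := ascPoch_nonneg (norm_nonneg b) n
  refine mul_le_mul ?_ (pow_le_pow_left₀ (norm_nonneg z) hz n) (by positivity) (by positivity)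
  exact div_le_div₀ (by positivity) hnum (by positivity) hden

lemma norm_hyp_le {a b c z : ℂ} (hc : 1 ≤ c.re) (hz : ‖z‖ ≤ 1/2) :
    ‖hyp a b c z‖ ≤ ∑' n, hypBound ‖a‖ ‖b‖ n := by
  have hs := summable_hypBound (norm_nonneg a) (norm_nonneg b)
  have hsn : Summable (fun n => ‖hypTerm a b c z n‖) :=
    hs.of_nonneg_of_le (fun n => norm_nonneg _) (norm_hypTerm_le hc hz)
  calc ‖hyp a b c z‖ ≤ ∑' n, ‖hypTerm a b c z n‖ := norm_tsum_le_tsum_norm hsn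
    _ ≤ ∑' n, hypBound ‖a‖ ‖b‖ n := Summable.tsum_le_tsum (norm_hypTerm_le hc hz) hsn hs

lemma continuousOn_hyp (a b c : ℂ) (hc : 1 ≤ c.re) :
    ContinuousOn (fun z => hyp a b c z) {z : ℂ | ‖z‖ ≤ 1/2} := by
  apply continuousOn_tsum (u := hypBound ‖a‖ ‖b‖)
  · intro n
    exact (continuous_const.mul (continuous_pow n)).continuousOn
  · exact summable_hypBound (norm_nonneg a) (norm_nonneg b)
  · intro n z hz
    exact norm_hypTerm_le hc hz n


lemma contOn_cpow_ofReal (w : ℂ) {s : Set ℝ} (hs : ∀ t ∈ s, 0 < t) :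
    ContinuousOn (fun t : ℝ => ((t : ℝ) : ℂ) ^ w) s := fun t ht =>
  (Complex.continuous_ofReal.continuousAt.cpow continuousAt_const
    (Or.inl (by simpa using hs t ht))).continuousWithinAt

lemma contOn_cpow_one_sub (w : ℂ) {s : Set ℝ} (hs : ∀ t ∈ s, t < 1) :
    ContinuousOn (fun t : ℝ => ((1 - t : ℝ) : ℂ) ^ w) s := fun t ht =>
  ((Complex.continuous_ofReal.comp (continuous_const.sub continuous_id)).continuousAt.cpow
    continuousAt_const (Or.inl (by
      simp only [Function.comp_apply, Complex.ofReal_re]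
      have := hs t ht
      simpa using sub_pos.mpr this))).continuousWithinAt

theorem integral_PCP_I1_integrable (k₁ k₁₂ s₂ p₁ p₂ : ℝ)
    (h1 : 1 ≤ k₁) (h12 : 1 ≤ k₁₂) :
    IntegrableOn (fun t : ℝ =>
        ((t : ℝ) : ℂ) ^ (-(I * (s₂ : ℂ)) - I * (p₂ : ℂ) - 1 / 2) *
          ((1 - t : ℝ) : ℂ) ^ (-(k₁₂ : ℂ) + I * (p₁ : ℂ) + I * (p₂ : ℂ)) *
          hyp (1 / 2 + k₁ - k₁₂ - I * (s₂ : ℂ)) (3 / 2 - k₁ - k₁₂ - I * (s₂ : ℂ))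
            (1 - 2 * I * (s₂ : ℂ)) t)
      (Ioo 0 (1 / 2)) volume ∧
    IntegrableOn (fun t : ℝ =>
        ((t : ℝ) : ℂ) ^ (-(I * (s₂ : ℂ)) - I * (p₂ : ℂ) - 1 / 2) *
          ((1 - t : ℝ) : ℂ) ^ ((k₁₂ : ℂ) - 1 + I * (p₁ : ℂ) + I * (p₂ : ℂ)) *
          hyp (1 / 2 + k₁ + k₁₂ - I * (s₂ : ℂ)) (-(1 / 2) + k₁ + k₁₂ - I * (s₂ : ℂ))
            (k₁₂ : ℂ) ((1 - t : ℝ) : ℂ))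
      (Ioo (1 / 2) 1) volume := by
  have hre₁ : (-(I * (s₂ : ℂ)) - I * (p₂ : ℂ) - 1 / 2).re = -(1/2) := by simp
  constructor
  · set a : ℂ := 1 / 2 + k₁ - k₁₂ - I * (s₂ : ℂ) with ha
    set b : ℂ := 3 / 2 - k₁ - k₁₂ - I * (s₂ : ℂ) with hb
    set c : ℂ := 1 - 2 * I * (s₂ : ℂ) with hc
    have hcre : (1 : ℝ) ≤ c.re := by simp [hc]
    set B : ℝ := ∑' n, hypBound ‖a‖ ‖b‖ n with hBdef
    have hBnn : 0 ≤ B :=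
      tsum_nonneg (hypBound_nonneg (norm_nonneg a) (norm_nonneg b))
    have hcont : ContinuousOn (fun t : ℝ =>
        ((t : ℝ) : ℂ) ^ (-(I * (s₂ : ℂ)) - I * (p₂ : ℂ) - 1 / 2) *
          ((1 - t : ℝ) : ℂ) ^ (-(k₁₂ : ℂ) + I * (p₁ : ℂ) + I * (p₂ : ℂ)) *
          hyp a b c t) (Ioo 0 (1/2)) := by
      refine ContinuousOn.mul (ContinuousOn.mul ?_ ?_) ?_
      · exact contOn_cpow_ofReal _ fun t ht => ht.1
      · exact contOn_cpow_one_sub _ fun t ht => by linarith [ht.2]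
      · refine (continuousOn_hyp a b c hcre).comp
          Complex.continuous_ofReal.continuousOn fun t ht => ?_
        simp only [mem_setOf_eq, Complex.norm_real, Real.norm_eq_abs,
          abs_of_pos ht.1]
        exact ht.2.le
    have hg : IntegrableOn (fun t : ℝ => ((1/2 : ℝ) ^ (-k₁₂) * B) * t ^ (-(1/2) : ℝ))
        (Ioo 0 (1/2)) volume := by
      have h0 : IntervalIntegrable (fun t : ℝ => t ^ (-(1/2) : ℝ)) volume 0 (1/2) :=
        intervalIntegral.intervalIntegrable_rpow' (by norm_num)
      rw [intervalIntegrable_iff_integrableOn_Ioo_of_le (by norm_num)] at h0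
      exact h0.const_mul _
    refine hg.mono' (hcont.aestronglyMeasurable measurableSet_Ioo) ?_
    rw [ae_restrict_iff' measurableSet_Ioo]
    filter_upwards with t ht
    have ht1 : 0 < t := ht.1
    have ht2 : t < 1/2 := ht.2
    have e1 : ‖((t : ℝ) : ℂ) ^ (-(I * (s₂ : ℂ)) - I * (p₂ : ℂ) - 1 / 2)‖
        = t ^ (-(1/2) : ℝ) := by
      rw [Complex.norm_cpow_eq_rpow_re_of_pos ht1, hre₁]
    have e2 : ‖((1 - t : ℝ) : ℂ) ^ (-(k₁₂ : ℂ) + I * (p₁ : ℂ) + I * (p₂ : ℂ))‖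
        = (1 - t) ^ (-k₁₂) := by
      rw [Complex.norm_cpow_eq_rpow_re_of_pos (by linarith)]
      norm_num
    have e3 : ‖hyp a b c t‖ ≤ B := by
      refine norm_hyp_le hcre ?_
      rw [Complex.norm_real, Real.norm_eq_abs, abs_of_pos ht1]
      exact ht2.le
    calc ‖_ * _ * hyp a b c (t : ℂ)‖
        = t ^ (-(1/2) : ℝ) * (1 - t) ^ (-k₁₂) * ‖hyp a b c (t : ℂ)‖ := by
          rw [norm_mul, norm_mul, e1, e2]
      _ ≤ t ^ (-(1/2) : ℝ) * (1/2 : ℝ) ^ (-k₁₂) * B := by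
          have h2 : (1 - t) ^ (-k₁₂) ≤ (1/2 : ℝ) ^ (-k₁₂) :=
            Real.rpow_le_rpow_of_nonpos (by norm_num) (by linarith) (by linarith)
          have ht0 : (0:ℝ) ≤ t ^ (-(1/2) : ℝ) := Real.rpow_nonneg ht1.le _
          exact mul_le_mul (mul_le_mul le_rfl h2 (Real.rpow_nonneg (by linarith) _) ht0)
            e3 (norm_nonneg _) (by positivity)
      _ = (1/2 : ℝ) ^ (-k₁₂) * B * t ^ (-(1/2) : ℝ) := by ring
  · set a : ℂ := 1 / 2 + k₁ + k₁₂ - I * (s₂ : ℂ) with ha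
    set b : ℂ := -(1 / 2) + k₁ + k₁₂ - I * (s₂ : ℂ) with hb
    set c : ℂ := (k₁₂ : ℂ) with hc
    have hcre : (1 : ℝ) ≤ c.re := by simp [hc, h12]
    set B : ℝ := ∑' n, hypBound ‖a‖ ‖b‖ n with hBdef
    have hBnn : 0 ≤ B :=
      tsum_nonneg (hypBound_nonneg (norm_nonneg a) (norm_nonneg b))
    have hcont : ContinuousOn (fun t : ℝ =>
        ((t : ℝ) : ℂ) ^ (-(I * (s₂ : ℂ)) - I * (p₂ : ℂ) - 1 / 2) *
          ((1 - t : ℝ) : ℂ) ^ ((k₁₂ : ℂ) - 1 + I * (p₁ : ℂ) + I * (p₂ : ℂ)) *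
          hyp a b c ((1 - t : ℝ) : ℂ)) (Ioo (1/2) 1) := by
      refine ContinuousOn.mul (ContinuousOn.mul ?_ ?_) ?_
      · exact contOn_cpow_ofReal _ fun t ht => by linarith [ht.1]
      · exact contOn_cpow_one_sub _ fun t ht => ht.2
      · refine (continuousOn_hyp a b c hcre).comp
          (Complex.continuous_ofReal.comp (continuous_const.sub continuous_id)).continuousOn
          fun t ht => ?_
        simp only [Function.comp_apply, mem_setOf_eq, Complex.norm_real, Real.norm_eq_abs]
        rw [abs_of_pos (by linarith [ht.2] : (0:ℝ) < 1 - t)]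
        linarith [ht.1]
    have hg : IntegrableOn (fun _ : ℝ => (1/2 : ℝ) ^ (-(1/2) : ℝ) * B)
        (Ioo (1/2) 1) volume :=
      (integrableOn_const_iff (by finiteness)).mpr (Or.inr measure_Ioo_lt_top)
    refine hg.mono' (hcont.aestronglyMeasurable measurableSet_Ioo) ?_
    rw [ae_restrict_iff' measurableSet_Ioo]
    filter_upwards with t ht
    have ht1 : (1:ℝ)/2 < t := ht.1
    have ht2 : t < 1 := ht.2
    have e1 : ‖((t : ℝ) : ℂ) ^ (-(I * (s₂ : ℂ)) - I * (p₂ : ℂ) - 1 / 2)‖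
        = t ^ (-(1/2) : ℝ) := by
      rw [Complex.norm_cpow_eq_rpow_re_of_pos (by linarith), hre₁]
    have e2 : ‖((1 - t : ℝ) : ℂ) ^ ((k₁₂ : ℂ) - 1 + I * (p₁ : ℂ) + I * (p₂ : ℂ))‖
        = (1 - t) ^ (k₁₂ - 1) := by
      rw [Complex.norm_cpow_eq_rpow_re_of_pos (by linarith)]
      norm_num
    have e3 : ‖hyp a b c ((1 - t : ℝ) : ℂ)‖ ≤ B := by
      refine norm_hyp_le hcre ?_
      rw [Complex.norm_real, Real.norm_eq_abs, abs_of_pos (by linarith : (0:ℝ) < 1 - t)]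
      linarith
    calc ‖_ * _ * hyp a b c ((1 - t : ℝ) : ℂ)‖
        = t ^ (-(1/2) : ℝ) * (1 - t) ^ (k₁₂ - 1) * ‖hyp a b c ((1 - t : ℝ) : ℂ)‖ := by
          rw [norm_mul, norm_mul, e1, e2]
      _ ≤ (1/2 : ℝ) ^ (-(1/2) : ℝ) * 1 * B := by
          have hA : t ^ (-(1/2) : ℝ) ≤ (1/2 : ℝ) ^ (-(1/2) : ℝ) :=
            Real.rpow_le_rpow_of_nonpos (by norm_num) (by linarith) (by norm_num)
          have hC : (1 - t) ^ (k₁₂ - 1) ≤ 1 :=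
            Real.rpow_le_one (by linarith) (by linarith) (by linarith)
          exact mul_le_mul (mul_le_mul hA hC (Real.rpow_nonneg (by linarith) _)
            (Real.rpow_nonneg (by norm_num) _)) e3 (norm_nonneg _) (by positivity)
      _ = (1/2 : ℝ) ^ (-(1/2) : ℝ) * B := by ring
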